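/- Let m, n ≥ 1 and let (π_{i,j}), for 0 ≤ i ≤ m and 0 ≤ j ≤ n, be permutations with π_{0,0} = id, together with positive integers k₁ ≤ k₂ ≤ ⋯ ≤ k_m and l₁ ≥ l₂ ≥ ⋯ ≥ l_n satisfying l₁ ≤ k₁, such that π_{i−1,j} ⋖_{k_i} π_{i,j} for all 1 ≤ i ≤ m and 0 ≤ j ≤ n, and π_{i,j−1} ⋖_{l_j} π_{i,j} for all 0 ≤ i ≤ m and 1 ≤ j ≤ n. Then for every 1 ≤ j ≤ n and every 0 ≤ i ≤ m with π_{i,j−1} ≠ id, we have l_j ≤ d₁(π_{i,j−1}); and for every 1 ≤ i ≤ m and every 0 ≤ j ≤ n with π_{i−1,j} ≠ id, we have k_i ≥ d₂(π_{i−1,j}). -/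

import Mathlib

/-- A permutation of the positive integers, modeled as a permutation of `ℕ`
fixing `0` (and, separately assumed, all but finitely many points). -/
def FinPerm (w : Equiv.Perm ℕ) : Prop :=
  w 0 = 0 ∧ {i : ℕ | w i ≠ i}.Finite

/-- The length `ℓ(w)`: the number of inversions, i.e. pairs `i < j` with `w i > w j`. -/
noncomputable def len (w : Equiv.Perm ℕ) : ℕ :=
  {p : ℕ × ℕ | p.1 < p.2 ∧ w p.2 < w p.1}.ncard

/-- The set of descents: positions `i ≥ 1` with `w i > w (i+1)`. -/
def descents (w : Equiv.Perm ℕ) : Set ℕ :=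
  {i : ℕ | 0 < i ∧ w (i + 1) < w i}

/-- `d₁(w)`: the first (smallest) descent of `w`. -/
noncomputable def d1 (w : Equiv.Perm ℕ) : ℕ := sInf (descents w)

/-- `d₂(w)`: the last (largest) descent of `w`. -/
noncomputable def d2 (w : Equiv.Perm ℕ) : ℕ := sSup (descents w)

/-- `kCover k ρ π` means `ρ ⋖_k π`:  `π = ρ t_{a b}` for some positive
`a ≤ k < b`, with `ℓ(π) = ℓ(ρ) + 1`. -/
def kCover (k : ℕ) (ρ π : Equiv.Perm ℕ) : Prop :=
  ∃ a b : ℕ, 0 < a ∧ a ≤ k ∧ k < b ∧ π = ρ * Equiv.swap a b ∧ len π = len ρ + 1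

/-! ### Auxiliary definitions and lemmas -/

/-- The set of inversions of a permutation. -/
def InvSet (w : Equiv.Perm ℕ) : Set (ℕ × ℕ) :=
  {p : ℕ × ℕ | p.1 < p.2 ∧ w p.2 < w p.1}

lemma len_eq_ncard (w : Equiv.Perm ℕ) : len w = (InvSet w).ncard := rfl

lemma mem_invSet {w : Equiv.Perm ℕ} {p : ℕ × ℕ} :
    p ∈ InvSet w ↔ p.1 < p.2 ∧ w p.2 < w p.1 := Iff.rfl

lemma mem_descents {w : Equiv.Perm ℕ} {p : ℕ} :
    p ∈ descents w ↔ 0 < p ∧ w (p + 1) < w p := Iff.rfl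

lemma invset_finite (w : Equiv.Perm ℕ) (h : FinPerm w) : (InvSet w).Finite := by
  obtain ⟨h0, hfin⟩ := h
  obtain ⟨N, hN⟩ := hfin.bddAbove
  have hfix : ∀ x, N < x → w x = x := by
    intro x hx
    by_contra hc
    exact absurd (hN hc) (by omega)
  apply Set.Finite.subset ((Set.finite_Iio (N + 1)).prod (Set.finite_Iio (N + 1)))
  rintro ⟨i, j⟩ hmem
  obtain ⟨hij, hinv⟩ := hmem
  change i < j at hij
  change w j < w i at hinv
  have hj : j ≤ N := by
    by_contra hc
    push_neg at hc
    have hwj := hfix j hc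
    have h1 : N < w i := by omega
    have h2 := hfix (w i) h1
    have h3 := w.injective h2
    omega
  simp only [Set.mem_prod, Set.mem_Iio]
  omega

/-- The sorting-swap map used to compare inversion sets of `w` and `w * swap a b`. -/
noncomputable def Fm (w : Equiv.Perm ℕ) (a b : ℕ) (p : ℕ × ℕ) : ℕ × ℕ :=
  @ite _ (p ∈ InvSet w) (Classical.propDecidable _) p
    (Equiv.swap a b p.1, Equiv.swap a b p.2)

lemma Fm_mem {w : Equiv.Perm ℕ} {a b : ℕ} {p : ℕ × ℕ} (h : p ∈ InvSet w) :
    Fm w a b p = p := if_pos h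

lemma Fm_not_mem {w : Equiv.Perm ℕ} {a b : ℕ} {p : ℕ × ℕ} (h : p ∉ InvSet w) :
    Fm w a b p = (Equiv.swap a b p.1, Equiv.swap a b p.2) := if_neg h

lemma swap_flip_core (w : Equiv.Perm ℕ) (a b : ℕ) (hab : a < b) (hw : w b < w a)
    {i j : ℕ} (hij : i < j) (hinv : w (Equiv.swap a b j) < w (Equiv.swap a b i))
    (hnot : ¬ (i < j ∧ w j < w i)) :
    Equiv.swap a b i < Equiv.swap a b j := by
  by_cases hia : i = a
  · subst hia
    by_cases hjb : j = b
    · subst hjb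
      rw [Equiv.swap_apply_left, Equiv.swap_apply_right] at hinv
      exfalso
      omega
    · have hja : j ≠ i := by omega
      rw [Equiv.swap_apply_left, Equiv.swap_apply_of_ne_of_ne hja hjb] at hinv ⊢
      rcases Nat.lt_or_ge b j with h | h
      · exact h
      · exact absurd ⟨hij, by omega⟩ hnot
  · by_cases hib : i = b
    · subst hib
      have hja : j ≠ a := by omega
      have hjb : j ≠ i := by omega
      rw [Equiv.swap_apply_right, Equiv.swap_apply_of_ne_of_ne hja hjb]
      omega
    · by_cases hjb : j = b
      · subst hjb
        rw [Equiv.swap_apply_of_ne_of_ne hia hib, Equiv.swap_apply_right] at hinv ⊢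
        rcases Nat.lt_or_ge i a with h | h
        · exact h
        · exact absurd ⟨hij, by omega⟩ hnot
      · by_cases hja : j = a
        · subst hja
          rw [Equiv.swap_apply_of_ne_of_ne hia hib, Equiv.swap_apply_left]
          omega
        · rw [Equiv.swap_apply_of_ne_of_ne hia hib, Equiv.swap_apply_of_ne_of_ne hja hjb]
          exact hij

lemma Fm_mapsTo (w : Equiv.Perm ℕ) (a b : ℕ) (hab : a < b) (hw : w b < w a) :
    Set.MapsTo (Fm w a b) (InvSet (w * Equiv.swap a b)) (InvSet w) := by
  intro p hp
  by_cases h : p ∈ InvSet w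
  · rw [Fm_mem h]; exact h
  · rw [Fm_not_mem h]
    simp only [mem_invSet, Equiv.Perm.mul_apply] at hp
    obtain ⟨hij, hinv⟩ := hp
    exact ⟨swap_flip_core w a b hab hw hij hinv h, hinv⟩

lemma Fm_injOn (w : Equiv.Perm ℕ) (a b : ℕ) (hab : a < b) (hw : w b < w a) :
    Set.InjOn (Fm w a b) (InvSet (w * Equiv.swap a b)) := by
  rintro ⟨p1, p2⟩ hp ⟨q1, q2⟩ hq hpq
  by_cases h1 : (p1, p2) ∈ InvSet w <;> by_cases h2 : (q1, q2) ∈ InvSet w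
  · rwa [Fm_mem h1, Fm_mem h2] at hpq
  · -- p fixed, q swapped: contradiction
    rw [Fm_mem h1, Fm_not_mem h2] at hpq
    exfalso
    apply h2
    simp only [mem_invSet, Equiv.Perm.mul_apply] at hp hq ⊢
    have e1 : p1 = Equiv.swap a b q1 := congrArg Prod.fst hpq
    have e2 : p2 = Equiv.swap a b q2 := congrArg Prod.snd hpq
    refine ⟨hq.1, ?_⟩
    have := hp.2
    rw [e1, e2, Equiv.swap_apply_self, Equiv.swap_apply_self] at this
    exact this
  · rw [Fm_not_mem h1, Fm_mem h2] at hpq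
    exfalso
    apply h1
    simp only [mem_invSet, Equiv.Perm.mul_apply] at hp hq ⊢
    have e1 : Equiv.swap a b p1 = q1 := congrArg Prod.fst hpq
    have e2 : Equiv.swap a b p2 = q2 := congrArg Prod.snd hpq
    refine ⟨hp.1, ?_⟩
    have := hq.2
    rw [← e1, ← e2, Equiv.swap_apply_self, Equiv.swap_apply_self] at this
    exact this
  · rw [Fm_not_mem h1, Fm_not_mem h2] at hpq
    have e1 : Equiv.swap a b p1 = Equiv.swap a b q1 := congrArg Prod.fst hpq
    have e2 : Equiv.swap a b p2 = Equiv.swap a b q2 := congrArg Prod.snd hpq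
    have f1 := (Equiv.swap a b).injective e1
    have f2 := (Equiv.swap a b).injective e2
    simp [f1, f2]

lemma len_swap_le (w : Equiv.Perm ℕ) (a b : ℕ) (hab : a < b) (hw : w b < w a)
    (hfin : (InvSet w).Finite) : len (w * Equiv.swap a b) ≤ len w := by
  rw [len_eq_ncard, len_eq_ncard]
  exact Set.ncard_le_ncard_of_injOn (Fm w a b) (Fm_mapsTo w a b hab hw)
    (Fm_injOn w a b hab hw) hfin

lemma len_swap_add_two_le (w : Equiv.Perm ℕ) (a b c : ℕ) (hac : a < c) (hcb : c < b)
    (h1 : w b < w c) (h2 : w c < w a) (hfin : (InvSet w).Finite) :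
    len (w * Equiv.swap a b) + 2 ≤ len w := by
  have hab : a < b := lt_trans hac hcb
  have hw : w b < w a := lt_trans h1 h2
  set D : Set (ℕ × ℕ) := {(a, c), (c, b)} with hD
  have hDsub : D ⊆ InvSet w := by
    rintro p hp
    simp only [hD, Set.mem_insert_iff, Set.mem_singleton_iff] at hp
    rcases hp with rfl | rfl
    · exact ⟨hac, h2⟩
    · exact ⟨hcb, h1⟩
  have hca : c ≠ a := by omega
  have hcb' : c ≠ b := by omega
  have hmaps : Set.MapsTo (Fm w a b) (InvSet (w * Equiv.swap a b)) (InvSet w \ D) := by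
    intro p hp
    refine ⟨Fm_mapsTo w a b hab hw hp, ?_⟩
    intro hmemD
    by_cases h : p ∈ InvSet w
    · rw [Fm_mem h] at hmemD
      simp only [hD, Set.mem_insert_iff, Set.mem_singleton_iff] at hmemD
      rcases hmemD with rfl | rfl
      · simp only [mem_invSet, Equiv.Perm.mul_apply] at hp
        rw [Equiv.swap_apply_of_ne_of_ne hca hcb', Equiv.swap_apply_left] at hp
        omega
      · simp only [mem_invSet, Equiv.Perm.mul_apply] at hp
        rw [Equiv.swap_apply_right, Equiv.swap_apply_of_ne_of_ne hca hcb'] at hp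
        omega
    · rw [Fm_not_mem h] at hmemD
      simp only [hD, Set.mem_insert_iff, Set.mem_singleton_iff, Prod.mk.injEq] at hmemD
      simp only [mem_invSet] at hp
      rcases hmemD with ⟨e1, e2⟩ | ⟨e1, e2⟩
      · -- swap p.1 = a, swap p.2 = c ⇒ p.1 = b, p.2 = c
        have f1 : p.1 = b := by
          have := congrArg (Equiv.swap a b) e1
          rwa [Equiv.swap_apply_self, Equiv.swap_apply_left] at this
        have f2 : p.2 = c := by
          have := congrArg (Equiv.swap a b) e2
          rwa [Equiv.swap_apply_self, Equiv.swap_apply_of_ne_of_ne hca hcb'] at this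
        have := hp.1
        omega
      · have f1 : p.1 = c := by
          have := congrArg (Equiv.swap a b) e1
          rwa [Equiv.swap_apply_self, Equiv.swap_apply_of_ne_of_ne hca hcb'] at this
        have f2 : p.2 = a := by
          have := congrArg (Equiv.swap a b) e2
          rwa [Equiv.swap_apply_self, Equiv.swap_apply_right] at this
        have := hp.1
        omega
  have hle := Set.ncard_le_ncard_of_injOn (Fm w a b) hmaps (Fm_injOn w a b hab hw)
    (hfin.diff : (InvSet w \ D).Finite)
  have hD2 : D.ncard = 2 := Set.ncard_pair (by simp [Prod.ext_iff]; omega)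
  have hdiff : (InvSet w \ D).ncard = (InvSet w).ncard - D.ncard :=
    Set.ncard_diff hDsub (hfin.subset hDsub)
  have h2le : D.ncard ≤ (InvSet w).ncard := Set.ncard_le_ncard hDsub hfin
  rw [len_eq_ncard, len_eq_ncard]
  omega

/-- Structure of a `k`-cover: the transposed values increase and there is no
intermediate value in between. -/
lemma cover_struct (k : ℕ) (ρ π : Equiv.Perm ℕ) (hρ : FinPerm ρ) (hπ : FinPerm π)
    (h : kCover k ρ π) :
    ∃ a b : ℕ, 0 < a ∧ a ≤ k ∧ k < b ∧ π = ρ * Equiv.swap a b ∧ ρ a < ρ b ∧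
      ∀ c, a < c → c < b → ¬(ρ a < ρ c ∧ ρ c < ρ b) := by
  obtain ⟨a, b, ha, hak, hkb, heq, hlen⟩ := h
  have hab : a < b := lt_of_le_of_lt hak hkb
  have hfinρ := invset_finite ρ hρ
  have hfinπ := invset_finite π hπ
  have hρab : ρ a < ρ b := by
    rcases lt_trichotomy (ρ a) (ρ b) with h | h | h
    · exact h
    · exact absurd (ρ.injective h) (by omega)
    · exfalso
      have hle := len_swap_le ρ a b hab h hfinρ
      rw [← heq] at hle
      omega
  refine ⟨a, b, ha, hak, hkb, heq, hρab, ?_⟩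
  rintro c hac hcb ⟨h1, h2⟩
  have hca : c ≠ a := by omega
  have hcb2 : c ≠ b := by omega
  have hπa : π a = ρ b := by rw [heq]; simp [Equiv.Perm.mul_apply]
  have hπb : π b = ρ a := by rw [heq]; simp [Equiv.Perm.mul_apply]
  have hπc : π c = ρ c := by
    rw [heq]
    simp only [Equiv.Perm.mul_apply]
    rw [Equiv.swap_apply_of_ne_of_ne hca hcb2]
  have hkey := len_swap_add_two_le π a b c hac hcb (by omega) (by omega) hfinπ
  have hps : π * Equiv.swap a b = ρ := by
    rw [heq, mul_assoc, Equiv.swap_mul_self, mul_one]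
  rw [hps] at hkey
  omega

/-- Propagation of the descent upper bound along a cover. -/
lemma d2_step (σ τ : Equiv.Perm ℕ) (K a b : ℕ) (ha : 0 < a) (hab : a < b) (haK : a ≤ K)
    (hτ : τ = σ * Equiv.swap a b) (hσab : σ a < σ b)
    (hmid : ∀ c, a < c → c < b → ¬(σ a < σ c ∧ σ c < σ b))
    (hσ : ∀ p ∈ descents σ, p ≤ K) :
    ∀ p ∈ descents τ, p ≤ K := by
  rintro p ⟨hp, hlt⟩
  rw [hτ] at hlt
  simp only [Equiv.Perm.mul_apply] at hlt
  by_cases hpa : p = a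
  · omega
  by_cases hp1a : p + 1 = a
  · omega
  by_cases hpb : p = b
  · subst hpb
    rw [Equiv.swap_apply_right, Equiv.swap_apply_of_ne_of_ne (by omega) (by omega)] at hlt
    exact hσ p ⟨by omega, by omega⟩
  by_cases hp1b : p + 1 = b
  · rw [Equiv.swap_apply_of_ne_of_ne hpa hpb, hp1b, Equiv.swap_apply_right] at hlt
    have h3 := hmid p (by omega) (by omega)
    have h4 : ¬ (σ p < σ b) := fun hh => h3 ⟨hlt, hh⟩
    have hne : σ p ≠ σ b := fun hh => hpb (σ.injective hh)
    exact hσ p ⟨hp, by rw [hp1b]; omega⟩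
  · rw [Equiv.swap_apply_of_ne_of_ne hpa hpb, Equiv.swap_apply_of_ne_of_ne hp1a hp1b] at hlt
    exact hσ p ⟨hp, hlt⟩

/-- Propagation of the descent lower bound along a cover. -/
lemma d1_step (σ τ : Equiv.Perm ℕ) (L k a b : ℕ) (ha : 0 < a) (hak : a ≤ k) (hkb : k < b)
    (hLk : L ≤ k) (hτ : τ = σ * Equiv.swap a b) (hσab : σ a < σ b)
    (hmid : ∀ c, a < c → c < b → ¬(σ a < σ c ∧ σ c < σ b))
    (hσ : ∀ p ∈ descents σ, L ≤ p) :
    ∀ p ∈ descents τ, L ≤ p := by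
  rintro p ⟨hp, hlt⟩
  by_contra hcon
  push_neg at hcon
  rw [hτ] at hlt
  simp only [Equiv.Perm.mul_apply] at hlt
  have hpb : p ≠ b := by omega
  have hp1b : p + 1 ≠ b := by omega
  by_cases hpa : p = a
  · subst hpa
    rw [Equiv.swap_apply_left, Equiv.swap_apply_of_ne_of_ne (by omega) hp1b] at hlt
    by_cases hd : σ (p + 1) < σ p
    · exact absurd (hσ p ⟨hp, hd⟩) (by omega)
    · have hne : σ p ≠ σ (p + 1) := fun hh => by
        have := σ.injective hh; omega
      exact hmid (p + 1) (by omega) (by omega) ⟨by omega, hlt⟩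
  by_cases hp1a : p + 1 = a
  · rw [Equiv.swap_apply_of_ne_of_ne hpa hpb, hp1a, Equiv.swap_apply_left] at hlt
    have hd : σ (p + 1) < σ p := by rw [hp1a]; omega
    exact absurd (hσ p ⟨hp, hd⟩) (by omega)
  · rw [Equiv.swap_apply_of_ne_of_ne hpa hpb, Equiv.swap_apply_of_ne_of_ne hp1a hp1b] at hlt
    exact absurd (hσ p ⟨hp, hlt⟩) (by omega)

lemma desc_between (w : Equiv.Perm ℕ) :
    ∀ j i, i < j → w j < w i → ∃ p, i ≤ p ∧ w (p + 1) < w p := by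
  intro j
  induction j with
  | zero => intro i h1 _; exact absurd h1 (Nat.not_lt_zero i)
  | succ j ih =>
    intro i h1 h2
    by_cases hd : w (j + 1) < w j
    · exact ⟨j, by omega, hd⟩
    · have hij : i ≠ j := by
        intro h; subst h; exact hd h2
      have hlt : w j < w i := lt_of_le_of_lt (not_lt.mp hd) h2
      exact ih i (by omega) hlt

lemma exists_descent (w : Equiv.Perm ℕ) (h0 : w 0 = 0) (hw : w ≠ 1) :
    (descents w).Nonempty := by
  have hex : ∃ i, w i ≠ i := by
    by_contra h
    push_neg at h
    exact hw (Equiv.ext h)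
  obtain ⟨i, hi⟩ := hex
  have hSne : {i : ℕ | w i ≠ i}.Nonempty := ⟨i, hi⟩
  set i0 := sInf {i : ℕ | w i ≠ i} with hi0def
  have hi0 : w i0 ≠ i0 := Nat.sInf_mem hSne
  have hpos : 0 < i0 := by
    rcases Nat.eq_zero_or_pos i0 with h | h
    · rw [h] at hi0; exact absurd h0 hi0
    · exact h
  have hfix : ∀ x, x < i0 → w x = x := by
    intro x hx
    by_contra hc
    have hle : i0 ≤ x := Nat.sInf_le hc
    omega
  have hwi0 : i0 < w i0 := by
    rcases lt_trichotomy (w i0) i0 with h | h | h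
    · have h2 := hfix (w i0) h
      exact absurd (w.injective h2) hi0
    · exact absurd h hi0
    · exact h
  set j0 := w.symm i0 with hj0def
  have hj : w j0 = i0 := w.apply_symm_apply i0
  have hij : i0 < j0 := by
    rcases lt_trichotomy j0 i0 with h | h | h
    · have h2 := hfix j0 h
      rw [hj] at h2
      omega
    · rw [h] at hj
      exact absurd hj hi0
    · exact h
  have hlt : w j0 < w i0 := by rw [hj]; exact hwi0
  obtain ⟨p, hp1, hp2⟩ := desc_between w j0 i0 hij hlt
  exact ⟨p, by omega, hp2⟩

/-- Corollary 4.2: in a growth diagram with weakly increasing `k`'s, weakly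
decreasing `l`'s and `l₁ ≤ k₁`, every square satisfies the descent conditions. -/
theorem stmt4 (m n : ℕ) (hm : 1 ≤ m) (hn : 1 ≤ n)
    (π : ℕ → ℕ → Equiv.Perm ℕ) (kk ll : ℕ → ℕ)
    (hfin : ∀ i ≤ m, ∀ j ≤ n, FinPerm (π i j))
    (h00 : π 0 0 = 1)
    (hkpos : ∀ i, 1 ≤ i → i ≤ m → 0 < kk i)
    (hlpos : ∀ j, 1 ≤ j → j ≤ n → 0 < ll j)
    (hkmono : ∀ i i', 1 ≤ i → i ≤ i' → i' ≤ m → kk i ≤ kk i')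
    (hlanti : ∀ j j', 1 ≤ j → j ≤ j' → j' ≤ n → ll j' ≤ ll j)
    (hlk : ll 1 ≤ kk 1)
    (hrow : ∀ i, 1 ≤ i → i ≤ m → ∀ j ≤ n, kCover (kk i) (π (i - 1) j) (π i j))
    (hcol : ∀ j, 1 ≤ j → j ≤ n → ∀ i ≤ m, kCover (ll j) (π i (j - 1)) (π i j)) :
    (∀ j, 1 ≤ j → j ≤ n → ∀ i ≤ m, π i (j - 1) ≠ 1 → ll j ≤ d1 (π i (j - 1))) ∧
    (∀ i, 1 ≤ i → i ≤ m → ∀ j ≤ n, π (i - 1) j ≠ 1 → d2 (π (i - 1) j) ≤ kk i) := by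
  have hid : ∀ p ∈ descents (1 : Equiv.Perm ℕ), False := by
    rintro p ⟨_, hlt⟩
    simp only [Equiv.Perm.one_apply] at hlt
    omega
  have inv_ub : ∀ K : ℕ, (∀ j', 1 ≤ j' → j' ≤ n → ll j' ≤ K) →
      ∀ i, i ≤ m → (∀ i', 1 ≤ i' → i' ≤ i → kk i' ≤ K) →
      ∀ j, j ≤ n → ∀ p ∈ descents (π i j), p ≤ K := by
    intro K hlK i
    induction i with
    | zero =>
      intro _ _ j
      induction j with
      | zero =>
        intro _ p hp
        rw [h00] at hp
        exact absurd hp (fun h => hid p h)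
      | succ j ihj =>
        intro hjn p hp
        have hcov := hcol (j + 1) (by omega) hjn 0 (by omega)
        rw [Nat.add_sub_cancel] at hcov
        obtain ⟨a, b, ha, hak, hkb, heq, hρab, hmidp⟩ :=
          cover_struct _ _ _ (hfin 0 (by omega) j (by omega)) (hfin 0 (by omega) (j + 1) hjn)
            hcov
        exact d2_step _ _ K a b ha (lt_of_le_of_lt hak hkb)
          (le_trans hak (hlK (j + 1) (by omega) hjn)) heq hρab hmidp
          (ihj (by omega)) p hp
    | succ i ihi =>
      intro him hk j hjn p hp
      have hcov := hrow (i + 1) (by omega) him j hjn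
      rw [Nat.add_sub_cancel] at hcov
      obtain ⟨a, b, ha, hak, hkb, heq, hρab, hmidp⟩ :=
        cover_struct _ _ _ (hfin i (by omega) j hjn) (hfin (i + 1) him j hjn) hcov
      exact d2_step _ _ K a b ha (lt_of_le_of_lt hak hkb)
        (le_trans hak (hk (i + 1) (by omega) (le_refl _))) heq hρab hmidp
        (ihi (by omega) (fun i' h1 h2 => hk i' h1 (by omega)) j hjn) p hp
  have inv_lb : ∀ L : ℕ, (∀ i', 1 ≤ i' → i' ≤ m → L ≤ kk i') →
      ∀ j, j ≤ n → (∀ j', 1 ≤ j' → j' ≤ j → L ≤ ll j') →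
      ∀ i, i ≤ m → ∀ p ∈ descents (π i j), L ≤ p := by
    intro L hLk j
    induction j with
    | zero =>
      intro _ _ i
      induction i with
      | zero =>
        intro _ p hp
        rw [h00] at hp
        exact absurd hp (fun h => hid p h)
      | succ i ihi =>
        intro him p hp
        have hcov := hrow (i + 1) (by omega) him 0 (by omega)
        rw [Nat.add_sub_cancel] at hcov
        obtain ⟨a, b, ha, hak, hkb, heq, hρab, hmidp⟩ :=
          cover_struct _ _ _ (hfin i (by omega) 0 (by omega)) (hfin (i + 1) him 0 (by omega))
            hcov
        exact d1_step _ _ L (kk (i + 1)) a b ha hak hkb (hLk (i + 1) (by omega) him) heq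
          hρab hmidp (ihi (by omega)) p hp
    | succ j ihj =>
      intro hjn hl i him p hp
      have hcov := hcol (j + 1) (by omega) hjn i him
      rw [Nat.add_sub_cancel] at hcov
      obtain ⟨a, b, ha, hak, hkb, heq, hρab, hmidp⟩ :=
        cover_struct _ _ _ (hfin i him j (by omega)) (hfin i him (j + 1) hjn) hcov
      exact d1_step _ _ L (ll (j + 1)) a b ha hak hkb (hl (j + 1) (by omega) (le_refl _))
        heq hρab hmidp
        (ihj (by omega) (fun j' h1 h2 => hl j' h1 (by omega)) i him) p hp
  constructor
  · intro j hj1 hjn i him hne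
    have hdesc : ∀ p ∈ descents (π i (j - 1)), ll j ≤ p := by
      apply inv_lb (ll j)
        (fun i' h1 h2 =>
          le_trans (le_trans (hlanti 1 j le_rfl hj1 hjn) hlk) (hkmono 1 i' le_rfl h1 h2))
        (j - 1) (by omega)
        (fun j' h1 h2 => hlanti j' j h1 (by omega) hjn)
        i him
    have hnonempty := exists_descent (π i (j - 1)) (hfin i him (j - 1) (by omega)).1 hne
    exact le_csInf hnonempty hdesc
  · intro i hi1 him j hjn hne
    have hdesc : ∀ p ∈ descents (π (i - 1) j), p ≤ kk i := by
      apply inv_ub (kk i)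
        (fun j' h1 h2 =>
          le_trans (le_trans (hlanti 1 j' le_rfl h1 h2) hlk) (hkmono 1 i le_rfl hi1 him))
        (i - 1) (by omega)
        (fun i' h1 h2 => hkmono i' i h1 (by omega) him)
        j hjn
    exact csSup_le' (fun p hp => hdesc p hp)
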